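/- For every integer n ≥ 1, the polynomial B_{n+1} satisfies B_{n+1}(1) = 0 and the recurrence relation B'_{n+1}(s) = B_n(s) - s^{n-1}/n! (equality of polynomials in s, where B'_{n+1} denotes the derivative of B_{n+1}). -/

import Mathlib

open Finset Polynomial

/-- The polynomials `B n ∈ ℚ[X]`: `B 1 = 0` and, for `n ≥ 1`,
`B (n+1) (s) = -(1/n!) ∑_{k=1}^n binom(n,k) (H_n - H_{n-k}) (s-1)^k`. -/
noncomputable def B : ℕ → Polynomial ℚ
  | 0 => 0
  | n + 1 =>
      Polynomial.C (-(n.factorial : ℚ)⁻¹) *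
        ∑ k ∈ Finset.Icc 1 n,
          Polynomial.C ((n.choose k : ℚ) * (harmonic n - harmonic (n - k))) *
            (Polynomial.X - 1) ^ k

lemma Bsucc (n : ℕ) : B (n+1) = Polynomial.C (-(n.factorial : ℚ)⁻¹) *
        ∑ k ∈ Finset.Icc 1 n,
          Polynomial.C ((n.choose k : ℚ) * (harmonic n - harmonic (n - k))) *
            (Polynomial.X - 1) ^ k := rfl

lemma coef_id (m j : ℕ) :
    ((1+j : ℕ) : ℚ) * (((m+1).choose (1+j) : ℚ) * (harmonic (m+1) - harmonic (m - j)))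
    = ((m:ℚ)+1) * ((m.choose j : ℚ) * (harmonic m - harmonic (m - j))) + (m.choose j : ℚ) := by
  have key : ((1+j) * ((m+1).choose (1+j)) : ℕ) = (m+1) * m.choose j := by
    rw [add_comm 1 j, mul_comm]; exact (Nat.add_one_mul_choose_eq m j).symm
  have keyQ : ((1+j : ℕ) : ℚ) * (((m+1).choose (1+j) : ℚ)) = ((m:ℚ)+1) * (m.choose j : ℚ) := by
    exact_mod_cast congrArg (Nat.cast : ℕ → ℚ) key
  have hm1 : ((m:ℚ)+1) ≠ 0 := by positivity
  have hinv : ((m:ℚ)+1) * ((m:ℚ)+1)⁻¹ = 1 := mul_inv_cancel₀ hm1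
  rw [harmonic_succ]
  push_cast at keyQ ⊢
  linear_combination (harmonic m - harmonic (m - j) + ((m:ℚ)+1)⁻¹) * keyQ
    + (m.choose j : ℚ) * hinv

theorem statement2 (n : ℕ) (hn : 1 ≤ n) :
    (B (n + 1)).eval 1 = 0 ∧
    derivative (B (n + 1)) =
      B n - Polynomial.C ((n.factorial : ℚ)⁻¹) * Polynomial.X ^ (n - 1) := by
  constructor
  · rw [Bsucc, eval_mul, eval_finset_sum, Finset.sum_eq_zero, mul_zero]
    intro k hk
    have hk1 : 1 ≤ k := (Finset.mem_Icc.mp hk).1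
    simp [zero_pow (by omega : k ≠ 0)]
  obtain ⟨m, rfl⟩ := Nat.exists_eq_succ_of_ne_zero (Nat.one_le_iff_ne_zero.mp hn)
  rw [Bsucc (m+1), Bsucc m, derivative_C_mul, derivative_sum]
  have hderiv : ∀ k ∈ Icc 1 (m+1),
      derivative (C (((m+1).choose k : ℚ) * (harmonic (m+1) - harmonic (m+1-k))) * (X - 1)^k)
      = C ((k:ℚ) * (((m+1).choose k : ℚ) * (harmonic (m+1) - harmonic (m+1-k)))) * (X - 1)^(k-1) := by
    intro k hk
    rw [derivative_C_mul, derivative_pow, derivative_sub, derivative_X, derivative_one,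
      sub_zero, mul_one, ← mul_assoc, ← C_mul]
    ring_nf
  rw [Finset.sum_congr rfl hderiv]
  rw [show Icc 1 (m+1) = Ico 1 (m+2) from (Finset.Ico_add_one_right_eq_Icc 1 (m+1)).symm,
    Finset.sum_Ico_eq_sum_range]
  simp only [Nat.add_sub_cancel_left, show m + 2 - 1 = m + 1 from rfl,
    show ∀ j, m + 1 - (1 + j) = m - j from fun j => by omega]
  have hsplit : ∀ j ∈ range (m+1),
      C (((1+j : ℕ) : ℚ) * (((m+1).choose (1+j) : ℚ) * (harmonic (m+1) - harmonic (m - j)))) * (X - 1)^j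
      = C ((m:ℚ)+1) * (C ((m.choose j : ℚ) * (harmonic m - harmonic (m - j))) * (X - 1)^j)
        + C ((m.choose j : ℚ)) * (X - 1)^j := by
    intro j hj
    rw [coef_id]
    simp only [C_add, C_mul]
    ring
  rw [Finset.sum_congr rfl hsplit, Finset.sum_add_distrib, ← Finset.mul_sum]
  have hbin : ∑ j ∈ range (m+1), C ((m.choose j : ℚ)) * (X - 1)^j = X ^ m := by
    have h2 := add_pow (X - 1 : ℚ[X]) 1 m
    simp only [sub_add_cancel, one_pow, mul_one] at h2
    rw [h2]
    refine Finset.sum_congr rfl fun j hj => ?_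
    simp [Polynomial.C_eq_natCast, mul_comm]
  rw [hbin]
  have hS : ∑ j ∈ range (m+1), C ((m.choose j : ℚ) * (harmonic m - harmonic (m - j))) * (X - 1)^j
      = ∑ k ∈ Icc 1 m, C ((m.choose k : ℚ) * (harmonic m - harmonic (m - k))) * (X - 1)^k := by
    rw [Finset.range_eq_Ico, Finset.sum_eq_sum_Ico_succ_bot (by omega)]
    simp [Finset.Ico_add_one_right_eq_Icc]
  rw [hS]
  have hfac : (-(((m+1).factorial : ℚ))⁻¹) * ((m:ℚ)+1) = -((m.factorial : ℚ))⁻¹ := by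
    rw [Nat.factorial_succ]
    push_cast
    rw [mul_inv]
    field_simp
  rw [mul_add, ← mul_assoc, ← C_mul, hfac]
  simp only [Nat.succ_sub_one, C_neg, neg_mul]
  ring
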